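/- Let (cₙ) be a sequence in (0,1) such that n² cₙ converges to a finite limit L ≥ 0 as n → ∞. Then liminf_{n→∞} ∏_{k=1}^{n} [k cₙ (1-cₙ)^{k-1} / (1 - (1-cₙ)^k)] > 0. -/

import Mathlib

open Filter

lemma aux_factor_lb (x : ℝ) (hx0 : 0 < x) (hx1 : x < 1) (k : ℕ) (hk : 1 ≤ k) :
    (1-x)^(k-1) ≤ (k:ℝ)*x*(1-x)^(k-1)/(1-(1-x)^k) := by
  have hden : 0 < 1 - (1-x)^k := by
    have h1 : (1-x)^k < 1 := pow_lt_one₀ (by linarith) (by linarith) (by omega)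
    linarith
  rw [le_div_iff₀ hden]
  have hber : 1 + (k:ℝ)*(-x) ≤ (1 + (-x))^k := one_add_mul_le_pow (by linarith) k
  have h2 : 1 - (1-x)^k ≤ (k:ℝ)*x := by
    have heq : (1 + -x) = 1 - x := by ring
    rw [heq] at hber; linarith
  have hpow : (0:ℝ) ≤ (1-x)^(k-1) := pow_nonneg (by linarith) _
  calc (1-x)^(k-1) * (1-(1-x)^k) ≤ (1-x)^(k-1) * ((k:ℝ)*x) :=
        mul_le_mul_of_nonneg_left h2 hpow
    _ = (k:ℝ)*x*(1-x)^(k-1) := by ring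

lemma aux_factor_ub (x : ℝ) (hx0 : 0 < x) (hx1 : x < 1) (k : ℕ) (hk : 1 ≤ k) :
    (k:ℝ)*x*(1-x)^(k-1)/(1-(1-x)^k) ≤ 1 := by
  have hden : 0 < 1 - (1-x)^k := by
    have h1 : (1-x)^k < 1 := pow_lt_one₀ (by linarith) (by linarith) (by omega)
    linarith
  rw [div_le_one hden]
  have hgs : (∑ i ∈ Finset.range k, (1-x) ^ i) * ((1-x) - 1) = (1-x) ^ k - 1 :=
    geom_sum_mul (1-x) k
  have hsum : (k:ℝ) * (1-x)^(k-1) ≤ ∑ i ∈ Finset.range k, (1-x) ^ i := by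
    have hterm : ∀ i ∈ Finset.range k, (1-x)^(k-1) ≤ (1-x)^i := by
      intro i hi
      exact pow_le_pow_of_le_one (by linarith) (by linarith)
        (by simp at hi; omega)
    calc (k:ℝ) * (1-x)^(k-1) = ∑ _i ∈ Finset.range k, (1-x)^(k-1) := by
          simp [Finset.sum_const, mul_comm]
      _ ≤ ∑ i ∈ Finset.range k, (1-x)^i := Finset.sum_le_sum hterm
  have key : 1 - (1-x)^k = x * ∑ i ∈ Finset.range k, (1-x) ^ i := by
    nlinarith [hgs]
  rw [key]
  calc (k:ℝ)*x*(1-x)^(k-1) = x * ((k:ℝ)*(1-x)^(k-1)) := by ring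
    _ ≤ x * ∑ i ∈ Finset.range k, (1-x)^i :=
        mul_le_mul_of_nonneg_left hsum (le_of_lt hx0)

lemma aux_exp_pow (x : ℝ) (hx0 : 0 < x) (hx1 : x < 1) (m : ℕ) :
    Real.exp (-((m:ℝ) * x / (1-x))) ≤ (1-x)^m := by
  have h1x : (0:ℝ) < 1 - x := by linarith
  have hlog : -(x/(1-x)) ≤ Real.log (1-x) := by
    have h := Real.log_le_sub_one_of_pos (show (0:ℝ) < (1-x)⁻¹ by positivity)
    rw [Real.log_inv] at h
    have heq : (1-x)⁻¹ - 1 = x/(1-x) := by field_simp; ring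
    linarith [heq ▸ h]
  have hbase : Real.exp (-(x/(1-x))) ≤ 1 - x := by
    calc Real.exp (-(x/(1-x))) ≤ Real.exp (Real.log (1-x)) := Real.exp_le_exp.mpr hlog
      _ = 1 - x := Real.exp_log h1x
  calc Real.exp (-((m:ℝ) * x / (1-x))) = (Real.exp (-(x/(1-x))))^m := by
        rw [← Real.exp_nat_mul]; ring_nf
    _ ≤ (1-x)^m := pow_le_pow_left₀ (Real.exp_nonneg _) hbase m

/-- If `(cₙ)` is a sequence in `(0,1)` with `n² cₙ → L` for some finite `L ≥ 0`,
then `liminf_{n→∞} ∏_{k=1}^{n} k cₙ (1-cₙ)^{k-1} / (1 - (1-cₙ)^k) > 0`. -/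
theorem stmt_5 (c : ℕ → ℝ) (hc : ∀ n, c n ∈ Set.Ioo (0 : ℝ) 1)
    (L : ℝ) (hL : 0 ≤ L)
    (hlim : Tendsto (fun n : ℕ => (n : ℝ) ^ 2 * c n) atTop (nhds L)) :
    0 < atTop.liminf
      (fun n : ℕ => ∏ k ∈ Finset.Icc 1 n,
        (k : ℝ) * c n * (1 - c n) ^ (k - 1) / (1 - (1 - c n) ^ k)) := by
  set f : ℕ → ℝ := fun n : ℕ => ∏ k ∈ Finset.Icc 1 n,
      (k : ℝ) * c n * (1 - c n) ^ (k - 1) / (1 - (1 - c n) ^ k) with hf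
  -- c tends to 0
  have hc0 : Tendsto c atTop (nhds 0) := by
    have h1 : Tendsto (fun n : ℕ => ((n:ℝ)^2)⁻¹) atTop (nhds 0) := by
      apply Tendsto.inv_tendsto_atTop
      exact (tendsto_pow_atTop two_ne_zero).comp tendsto_natCast_atTop_atTop
    have h2 := hlim.mul h1
    rw [mul_zero] at h2
    apply h2.congr'
    filter_upwards [eventually_ge_atTop 1] with n hn
    have hne : ((n:ℝ)^2) ≠ 0 := by
      have : (0:ℝ) < (n:ℝ) := by exact_mod_cast hn
      positivity
    field_simp
  -- f is bounded above by 1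
  have hub : ∀ n, f n ≤ 1 := by
    intro n
    apply Finset.prod_le_one
    · intro k hk
      have hk1 : 1 ≤ k := (Finset.mem_Icc.mp hk).1
      have h0 := (hc n).1
      have h1 := (hc n).2
      have hden : 0 < 1 - (1 - c n)^k := by
        have : (1 - c n)^k < 1 := pow_lt_one₀ (by linarith) (by linarith) (by omega)
        linarith
      have hnum : 0 ≤ (k:ℝ) * c n * (1 - c n)^(k-1) :=
        mul_nonneg (mul_nonneg (Nat.cast_nonneg k) (le_of_lt h0)) (pow_nonneg (by linarith) _)
      exact div_nonneg hnum (le_of_lt hden)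
    · intro k hk
      exact aux_factor_ub (c n) (hc n).1 (hc n).2 k (Finset.mem_Icc.mp hk).1
  -- the key eventual lower bound
  have hev : ∀ᶠ n in atTop, Real.exp (-(2*(L+1))) ≤ f n := by
    filter_upwards [hlim.eventually_le_const (by linarith : L < L + 1),
      hc0.eventually_le_const (by norm_num : (0:ℝ) < 1/2),
      eventually_ge_atTop 1] with n hA hB hn
    set x := c n with hx
    have hx0 : 0 < x := (hc n).1
    have hx1 : x < 1 := (hc n).2
    set M : ℕ := ∑ k ∈ Finset.Icc 1 n, (k - 1) with hM
    have step1 : (1 - x)^M ≤ f n := by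
      rw [hf]
      have := Finset.prod_pow_eq_pow_sum (Finset.Icc 1 n) (fun k => k - 1) (1 - x)
      rw [← hM] at this
      rw [← this]
      apply Finset.prod_le_prod
      · intro k hk; exact pow_nonneg (by linarith) _
      · intro k hk
        exact aux_factor_lb x hx0 hx1 k (Finset.mem_Icc.mp hk).1
    have step2 : Real.exp (-((M:ℝ) * x / (1-x))) ≤ (1 - x)^M := aux_exp_pow x hx0 hx1 M
    have hMle : (M:ℝ) ≤ (n:ℝ)^2 := by
      have hMn : M ≤ n * n := by
        rw [hM]
        calc ∑ k ∈ Finset.Icc 1 n, (k - 1) ≤ ∑ _k ∈ Finset.Icc 1 n, n := by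
              apply Finset.sum_le_sum
              intro k hk
              have := (Finset.mem_Icc.mp hk).2; omega
          _ = n * n := by simp [Nat.Icc_eq_range', mul_comm]
      calc (M:ℝ) ≤ ((n*n : ℕ) : ℝ) := by exact_mod_cast hMn
        _ = (n:ℝ)^2 := by push_cast; ring
    have hexp : (M:ℝ) * x / (1-x) ≤ 2*(L+1) := by
      have h1x : (1:ℝ)/2 ≤ 1 - x := by linarith
      have hdiv : (M:ℝ) * x / (1-x) ≤ (M:ℝ) * x / (1/2) := by
        apply div_le_div_of_nonneg_left _ (by norm_num) h1x
        positivity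
      have : (M:ℝ) * x ≤ (n:ℝ)^2 * x := mul_le_mul_of_nonneg_right hMle (le_of_lt hx0)
      have hnx : (n:ℝ)^2 * x ≤ L + 1 := hA
      calc (M:ℝ) * x / (1-x) ≤ (M:ℝ) * x / (1/2) := hdiv
        _ = 2 * ((M:ℝ) * x) := by ring
        _ ≤ 2 * ((n:ℝ)^2 * x) := by linarith
        _ ≤ 2 * (L+1) := by linarith
    calc Real.exp (-(2*(L+1))) ≤ Real.exp (-((M:ℝ) * x / (1-x))) :=
          Real.exp_le_exp.mpr (by linarith)
      _ ≤ (1-x)^M := step2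
      _ ≤ f n := step1
  -- conclude
  have hcobdd : IsCoboundedUnder (· ≥ ·) atTop f :=
    (isBoundedUnder_of ⟨1, fun n => hub n⟩).isCoboundedUnder_ge
  calc (0:ℝ) < Real.exp (-(2*(L+1))) := Real.exp_pos _
    _ ≤ atTop.liminf f := le_liminf_of_le hcobdd hev
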